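/- Fix an integer m ≥ 1. If x is a sequence of positive reals belonging to C_∞^G(Δ_G^m) with x_1 = x_2 = ⋯ = x_m = 1, then the sequence k ↦ (1/k^m) · |log x_k| is bounded. (In geometric notation: sup_k e^{k^{-m}} ⊙ |x_k|_G < ∞.) -/
import Mathlib


/-- Classical `m`-th order forward difference
`Δ^m y_k = ∑_{v=0}^m (−1)^v C(m,v) y_{k+v}`. -/
noncomputable def fdiff (m : ℕ) (y : ℕ → ℝ) (k : ℕ) : ℝ :=
  ∑ v ∈ Finset.range (m + 1), (-1 : ℝ) ^ v * (m.choose v : ℝ) * y (k + v)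

/-- The Cesàro mean `(1/n) ∑_{k=1}^n Δ^m (log x)_k`. -/
noncomputable def cesaro (m : ℕ) (x : ℕ → ℝ) (n : ℕ) : ℝ :=
  (1 / (n : ℝ)) * ∑ k ∈ Finset.Icc 1 n, fdiff m (fun j => Real.log (x j)) k

/-- Membership in the bigeometric Cesàro difference space `C_p^G(Δ_G^m)`. -/
def memCpG (m : ℕ) (p : ℝ) (x : ℕ → ℝ) : Prop :=
  (∀ k, 1 ≤ k → 0 < x k) ∧ Summable (fun n : ℕ => |cesaro m x n| ^ p)

/-- Membership in the bigeometric Cesàro difference space `C_∞^G(Δ_G^m)`. -/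
def memCinfG (m : ℕ) (x : ℕ → ℝ) : Prop :=
  (∀ k, 1 ≤ k → 0 < x k) ∧ ∃ C : ℝ, ∀ n : ℕ, |cesaro m x n| ≤ C

lemma fdiff_zero (y : ℕ → ℝ) (k : ℕ) : fdiff 0 y k = y k := by
  simp [fdiff]

lemma fdiff_eq_fwdDiff (m : ℕ) (y : ℕ → ℝ) (k : ℕ) :
    fdiff m y k = (-1 : ℝ) ^ m * (fwdDiff 1)^[m] y k := by
  rw [fwdDiff_iter_eq_sum_shift, Finset.mul_sum, fdiff]
  apply Finset.sum_congr rfl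
  intro v hv
  have hvm : v ≤ m := Nat.lt_succ_iff.mp (Finset.mem_range.mp hv)
  have hsign : (-1 : ℝ) ^ m * (-1 : ℝ) ^ (m - v) = (-1 : ℝ) ^ v := by
    rw [← pow_add, show m + (m - v) = 2 * (m - v) + v by omega, pow_add, pow_mul]
    simp
  rw [zsmul_eq_mul, smul_eq_mul, mul_one]
  push_cast
  rw [← mul_assoc, ← mul_assoc, hsign]

lemma fdiff_succ (m : ℕ) (y : ℕ → ℝ) (k : ℕ) :
    fdiff (m + 1) y k = fdiff m y k - fdiff m y (k + 1) := by
  rw [fdiff_eq_fwdDiff, fdiff_eq_fwdDiff, fdiff_eq_fwdDiff,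
    Function.iterate_succ_apply', fwdDiff]
  ring

lemma sum_fdiff_telescope (m : ℕ) (y : ℕ → ℝ) (n : ℕ) :
    ∑ k ∈ Finset.Icc 1 n, fdiff (m + 1) y k = fdiff m y 1 - fdiff m y (n + 1) := by
  induction n with
  | zero => simp
  | succ n ih =>
      rw [Finset.sum_Icc_succ_top (by omega : 1 ≤ n + 1), ih, fdiff_succ]
      ring

/-- if `x ∈ υC_∞^G(Δ_G^m)` (i.e. `x ∈ C_∞^G(Δ_G^m)` with
`x_1 = ⋯ = x_m = 1`), then `sup_k e^{k^{-m}} ⊙ |x_k|_G < ∞`, i.e.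
the sequence `k ↦ (1/k^m)·|log x_k|` is bounded. -/
theorem upsilonCinfG_growth_bound (m : ℕ) (hm : 1 ≤ m) (x : ℕ → ℝ)
    (hx : memCinfG m x) (hone : ∀ i, 1 ≤ i → i ≤ m → x i = 1) :
    ∃ C : ℝ, ∀ k : ℕ, (1 / (k : ℝ) ^ m) * |Real.log (x k)| ≤ C := by
  obtain ⟨hpos, C0, hC0⟩ := hx
  set y : ℕ → ℝ := fun j => Real.log (x j) with hy
  have hC0' : (0 : ℝ) ≤ C0 := le_trans (abs_nonneg _) (hC0 0)
  -- bound on partial sums of fdiff m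
  have hS : ∀ n : ℕ, |∑ k ∈ Finset.Icc 1 n, fdiff m y k| ≤ C0 * n := by
    intro n
    rcases Nat.eq_zero_or_pos n with h | h
    · subst h; simp
    · have hn : (0 : ℝ) < n := by exact_mod_cast h
      have := hC0 n
      rw [cesaro, abs_mul, abs_of_pos (by positivity : (0:ℝ) < 1 / (n:ℝ))] at this
      have := mul_le_mul_of_nonneg_left this (le_of_lt hn)
      rw [← mul_assoc, mul_one_div, div_self (ne_of_gt hn), one_mul] at this
      linarith [this]
  -- main induction
  have key : ∀ j : ℕ, j ≤ m - 1 → ∃ C : ℝ, 0 ≤ C ∧ ∀ n : ℕ,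
      |fdiff (m - 1 - j) y (n + 1)| ≤ C * ((n : ℝ) + 1) ^ (j + 1) := by
    intro j
    induction j with
    | zero =>
        intro _
        refine ⟨|fdiff (m - 1) y 1| + C0, by positivity, fun n => ?_⟩
        have htel := sum_fdiff_telescope (m - 1) y n
        rw [show m - 1 + 1 = m by omega] at htel
        have h1 : |fdiff (m - 1 - 0) y (n + 1)| ≤ |fdiff (m - 1) y 1| + C0 * n := by
          have : fdiff (m - 1) y (n + 1) =
              fdiff (m - 1) y 1 - ∑ k ∈ Finset.Icc 1 n, fdiff m y k := by
            rw [htel]; ring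
          rw [Nat.sub_zero, this]
          calc |fdiff (m-1) y 1 - ∑ k ∈ Finset.Icc 1 n, fdiff m y k|
              ≤ |fdiff (m-1) y 1| + |∑ k ∈ Finset.Icc 1 n, fdiff m y k| := abs_sub _ _
            _ ≤ |fdiff (m-1) y 1| + C0 * n := by linarith [hS n]
        have hn0 : (0:ℝ) ≤ n := Nat.cast_nonneg n
        calc |fdiff (m - 1 - 0) y (n + 1)| ≤ |fdiff (m - 1) y 1| + C0 * n := h1
          _ ≤ (|fdiff (m - 1) y 1| + C0) * ((n:ℝ) + 1) ^ (0 + 1) := by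
              rw [pow_one]; nlinarith [abs_nonneg (fdiff (m-1) y 1)]
    | succ j ih =>
        intro hj1
        obtain ⟨C, hC, hInd⟩ := ih (by omega)
        set s := m - 1 - (j + 1) with hsdef
        have hseq : m - 1 - j = s + 1 := by omega
        rw [hseq] at hInd
        refine ⟨|fdiff s y 1| + C, by positivity, fun n => ?_⟩
        have htel := sum_fdiff_telescope s y n
        have hsum : |∑ k ∈ Finset.Icc 1 n, fdiff (s + 1) y k|
            ≤ C * (n : ℝ) ^ (j + 2) := by
          calc |∑ k ∈ Finset.Icc 1 n, fdiff (s + 1) y k|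
              ≤ ∑ k ∈ Finset.Icc 1 n, |fdiff (s + 1) y k| :=
                Finset.abs_sum_le_sum_abs _ _
            _ ≤ ∑ k ∈ Finset.Icc 1 n, C * (n : ℝ) ^ (j + 1) := by
                apply Finset.sum_le_sum
                intro k hk
                obtain ⟨hk1, hk2⟩ := Finset.mem_Icc.mp hk
                obtain ⟨k', rfl⟩ : ∃ k', k = k' + 1 :=
                  ⟨k - 1, by omega⟩
                calc |fdiff (s + 1) y (k' + 1)| ≤ C * ((k' : ℝ) + 1) ^ (j + 1) := hInd k'
                  _ ≤ C * (n : ℝ) ^ (j + 1) := by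
                      apply mul_le_mul_of_nonneg_left _ hC
                      apply pow_le_pow_left₀ (by positivity)
                      have : (k' + 1 : ℕ) ≤ n := hk2
                      exact_mod_cast this
            _ = (n : ℝ) * (C * (n : ℝ) ^ (j + 1)) := by
                rw [Finset.sum_const, Nat.card_Icc]
                simp [nsmul_eq_mul]
            _ = C * (n : ℝ) ^ (j + 2) := by ring
        have h1 : |fdiff s y (n + 1)| ≤ |fdiff s y 1| + C * (n : ℝ) ^ (j + 2) := by
          have heq : fdiff s y (n + 1) =
              fdiff s y 1 - ∑ k ∈ Finset.Icc 1 n, fdiff (s + 1) y k := by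
            rw [htel]; ring
          rw [heq]
          calc |fdiff s y 1 - ∑ k ∈ Finset.Icc 1 n, fdiff (s+1) y k|
              ≤ |fdiff s y 1| + |∑ k ∈ Finset.Icc 1 n, fdiff (s+1) y k| := abs_sub _ _
            _ ≤ _ := by linarith
        have hpow1 : (n : ℝ) ^ (j + 2) ≤ ((n : ℝ) + 1) ^ (j + 2) :=
          pow_le_pow_left₀ (Nat.cast_nonneg n) (by linarith) _
        have hpow2 : (1 : ℝ) ≤ ((n : ℝ) + 1) ^ (j + 2) :=
          one_le_pow₀ (by linarith [Nat.cast_nonneg (α := ℝ) n])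
        calc |fdiff s y (n + 1)| ≤ |fdiff s y 1| + C * (n : ℝ) ^ (j + 2) := h1
          _ ≤ (|fdiff s y 1| + C) * ((n : ℝ) + 1) ^ (j + 1 + 1) := by
              have h3 : C * (n:ℝ)^(j+2) ≤ C * ((n:ℝ)+1)^(j+2) :=
                mul_le_mul_of_nonneg_left hpow1 hC
              nlinarith [abs_nonneg (fdiff s y 1)]
  obtain ⟨C, hC, hB⟩ := key (m - 1) le_rfl
  rw [Nat.sub_self] at hB
  have hexp : m - 1 + 1 = m := by omega
  rw [hexp] at hB
  refine ⟨C, fun k => ?_⟩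
  rcases k with _ | n
  · simp [zero_pow (by omega : m ≠ 0), hC]
  · have hb := hB n
    rw [fdiff_zero] at hb
    have hp : (0 : ℝ) < ((n : ℝ) + 1) ^ m := by positivity
    have : ((n + 1 : ℕ) : ℝ) = (n : ℝ) + 1 := by push_cast; ring
    rw [this]
    rw [one_div, ← div_eq_inv_mul, div_le_iff₀ hp]
    calc |Real.log (x (n + 1))| = |y (n + 1)| := rfl
      _ ≤ C * ((n : ℝ) + 1) ^ m := hb
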